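/- If A ∈ M_n ⊗ M_m and B ∈ M_m ⊗ M_l are positive semidefinite Hermitian matrices, then their star product A*B ∈ M_n ⊗ M_l is a positive semidefinite Hermitian matrix. -/

import Mathlib

open Matrix ComplexOrder

/-- The star product on matrices. -/
noncomputable def starMat {n m l : ℕ} (A : Matrix (Fin n × Fin m) (Fin n × Fin m) ℂ)
    (B : Matrix (Fin m × Fin l) (Fin m × Fin l) ℂ) :
    Matrix (Fin n × Fin l) (Fin n × Fin l) ℂ :=
  Matrix.of fun p q => ∑ a : Fin m, ∑ b : Fin m, A (p.1, a) (q.1, b) * B (a, p.2) (b, q.2)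

lemma starMat_factor {n m l : ℕ} (C : Matrix (Fin n × Fin m) (Fin n × Fin m) ℂ)
    (D : Matrix (Fin m × Fin l) (Fin m × Fin l) ℂ) :
    starMat (Cᴴ * C) (Dᴴ * D) =
      (Matrix.of fun (kj : (Fin n × Fin m) × (Fin m × Fin l)) (q : Fin n × Fin l) =>
        ∑ b : Fin m, C kj.1 (q.1, b) * D kj.2 (b, q.2))ᴴ *
      (Matrix.of fun kj q => ∑ b : Fin m, C kj.1 (q.1, b) * D kj.2 (b, q.2) :
        Matrix ((Fin n × Fin m) × (Fin m × Fin l)) (Fin n × Fin l) ℂ) := by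
  ext p q
  simp only [starMat, Matrix.of_apply, Matrix.mul_apply, Matrix.conjTranspose_apply]
  set g : (Fin m × Fin m) → ((Fin n × Fin m) × (Fin m × Fin l)) → ℂ := fun ab kj =>
    star (C kj.1 (p.1, ab.1)) * C kj.1 (q.1, ab.2) *
      (star (D kj.2 (ab.1, p.2)) * D kj.2 (ab.2, q.2)) with hg
  have h1 : (∑ a : Fin m, ∑ b : Fin m,
      (∑ k, star (C k (p.1, a)) * C k (q.1, b)) * (∑ j, star (D j (a, p.2)) * D j (b, q.2)))
      = ∑ ab : Fin m × Fin m, ∑ kj : (Fin n × Fin m) × (Fin m × Fin l), g ab kj := by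
    simp only [Fintype.sum_prod_type, Finset.sum_mul_sum, hg]
    exact Finset.sum_congr rfl fun a _ => Finset.sum_congr rfl fun b _ =>
      Finset.sum_congr rfl fun k1 _ => Finset.sum_comm
  have h2 : (∑ kj : (Fin n × Fin m) × (Fin m × Fin l),
      star (∑ a : Fin m, C kj.1 (p.1, a) * D kj.2 (a, p.2)) *
        (∑ b : Fin m, C kj.1 (q.1, b) * D kj.2 (b, q.2)))
      = ∑ kj : (Fin n × Fin m) × (Fin m × Fin l), ∑ ab : Fin m × Fin m, g ab kj := by
    refine Finset.sum_congr rfl fun kj _ => ?_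
    simp only [star_sum, star_mul', Finset.sum_mul_sum, Fintype.sum_prod_type, hg]
    refine Finset.sum_congr rfl fun a _ => Finset.sum_congr rfl fun b _ => ?_
    ring
  rw [h1, h2, Finset.sum_comm]

theorem stmt5 {n m l : ℕ} (A : Matrix (Fin n × Fin m) (Fin n × Fin m) ℂ)
    (B : Matrix (Fin m × Fin l) (Fin m × Fin l) ℂ)
    (hA : A.PosSemidef) (hB : B.PosSemidef) : (starMat A B).PosSemidef := by
  obtain ⟨C, rfl⟩ : ∃ C, A = Cᴴ * C := by
    open scoped MatrixOrder in exact CStarAlgebra.nonneg_iff_eq_star_mul_self.mp hA.nonneg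
  obtain ⟨D, rfl⟩ : ∃ D, B = Dᴴ * D := by
    open scoped MatrixOrder in exact CStarAlgebra.nonneg_iff_eq_star_mul_self.mp hB.nonneg
  rw [starMat_factor]
  exact Matrix.posSemidef_conjTranspose_mul_self _
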